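/- The function ψ(x) = -(x/2)√(1-x²) satisfies A[ψ](x) = x for every x ∈ (-1,1), where A is the Hadamard finite-part operator; i.e., A⁻¹[y](x) = -(x/2)√(1-x²). -/

import Mathlib

open Real Filter MeasureTheory

noncomputable def hadFx (x y : ℝ) : ℝ :=
  ((1 - 2*x^2) / (2 * Real.sqrt (1 - x^2))) *
      (Real.log (1 - x*y + Real.sqrt (1 - x^2) * Real.sqrt (1 - y^2)) - Real.log (x - y))
    + x * Real.arcsin y - Real.sqrt (1 - y^2)/2 - (x/2) * (Real.sqrt (1 - y^2)/(x - y))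

lemma hadFx_deriv (x y : ℝ) (hx : x ∈ Set.Ioo (-1 : ℝ) 1) (hy : y ∈ Set.Ioo (-1 : ℝ) 1)
    (hxy : y ≠ x) :
    HasDerivAt (hadFx x) (-(y / 2) * Real.sqrt (1 - y ^ 2) / (x - y) ^ 2) y := by
  obtain ⟨hx1, hx2⟩ := hx
  obtain ⟨hy1, hy2⟩ := hy
  have hs2pos : (0:ℝ) < 1 - x^2 := by nlinarith
  have hS2pos : (0:ℝ) < 1 - y^2 := by nlinarith
  set s := Real.sqrt (1 - x^2) with hs_def
  set S := Real.sqrt (1 - y^2) with hS_def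
  have hs : 0 < s := Real.sqrt_pos.2 hs2pos
  have hS : 0 < S := Real.sqrt_pos.2 hS2pos
  have hs2 : s^2 = 1 - x^2 := Real.sq_sqrt hs2pos.le
  have hS2 : S^2 = 1 - y^2 := Real.sq_sqrt hS2pos.le
  have hxy' : x - y ≠ 0 := sub_ne_zero.2 (Ne.symm hxy)
  have hQ : 0 < 1 - x*y + s*S := by nlinarith [mul_pos hs hS]
  -- derivative of t ↦ sqrt (1 - t^2)
  have hsq : HasDerivAt (fun t : ℝ => Real.sqrt (1 - t^2)) (-(2*y) / (2*S)) y := by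
    have h1 : HasDerivAt (fun t : ℝ => 1 - t^2) (-(2*y)) y := by
      simpa using ((hasDerivAt_pow 2 y).const_sub 1)
    have := (Real.hasDerivAt_sqrt hS2pos.ne').comp y h1
    simpa [hS_def, div_eq_mul_inv, mul_comm, Function.comp_def] using this
  -- derivative of the log part
  have hL : HasDerivAt (fun t : ℝ =>
      Real.log (1 - x*t + s * Real.sqrt (1 - t^2)) - Real.log (x - t))
      (s / (S * (x - y))) y := by
    have hQd : HasDerivAt (fun t : ℝ => 1 - x*t + s * Real.sqrt (1 - t^2))
        (-x + s * (-(2*y) / (2*S))) y := by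
      have h1 : HasDerivAt (fun t : ℝ => 1 - x*t) (-x) y := by
        simpa using ((hasDerivAt_id y).const_mul x).const_sub 1
      exact h1.add (hsq.const_mul s)
    have hlog1 : HasDerivAt (fun t : ℝ => Real.log (1 - x*t + s * Real.sqrt (1 - t^2)))
        ((1 - x*y + s*S)⁻¹ * (-x + s * (-(2*y) / (2*S)))) y := by
      have := (Real.hasDerivAt_log hQ.ne').comp y hQd
      simpa [hS_def, Function.comp_def] using this
    have hlog2 : HasDerivAt (fun t : ℝ => Real.log (x - t)) ((x - y)⁻¹ * (-1)) y := by
      have h2 : HasDerivAt (fun t : ℝ => x - t) (-1) y := by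
        simpa using (hasDerivAt_id y).const_sub x
      exact (Real.hasDerivAt_log hxy').comp y h2
    have := hlog1.sub hlog2
    refine this.congr_deriv ?_
    symm
    field_simp
    linear_combination S * hs2 - s * hS2
  have hA : HasDerivAt Real.arcsin (1 / S) y := Real.hasDerivAt_arcsin hy1.ne' hy2.ne
  have h2 : HasDerivAt (fun t : ℝ => x - t) (-1) y := by
    simpa using (hasDerivAt_id y).const_sub x
  have hdiv : HasDerivAt (fun t : ℝ => Real.sqrt (1 - t^2) / (x - t))
      ((-(2*y) / (2*S) * (x - y) - S * (-1)) / (x - y)^2) y := hsq.div h2 hxy'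
  have htot := (((hL.const_mul ((1 - 2*x^2) / (2*s))).add (hA.const_mul x)).sub
      (hsq.div_const 2)).sub (hdiv.const_mul (x/2))
  unfold hadFx
  refine htot.congr_deriv ?_
  symm
  field_simp
  linear_combination (x - y) * hS2

lemma hadFx_contAt (x y : ℝ) (hx : x ∈ Set.Ioo (-1 : ℝ) 1) (hy : y ∈ Set.Icc (-1 : ℝ) 1)
    (hxy : y ≠ x) : ContinuousAt (hadFx x) y := by
  obtain ⟨hx1, hx2⟩ := hx
  obtain ⟨hy1, hy2⟩ := hy
  have hxy' : x - y ≠ 0 := sub_ne_zero.2 (Ne.symm hxy)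
  have hs : 0 ≤ Real.sqrt (1 - x^2) := Real.sqrt_nonneg _
  have hS : 0 ≤ Real.sqrt (1 - y^2) := Real.sqrt_nonneg _
  have hQ : 0 < 1 - x*y + Real.sqrt (1 - x^2) * Real.sqrt (1 - y^2) := by
    nlinarith [mul_nonneg hs hS, sq_nonneg (x - y),
      mul_nonneg (by linarith : (0:ℝ) ≤ 1 - y) (by linarith : (0:ℝ) ≤ 1 + y)]
  have hcQ : Continuous (fun t : ℝ => 1 - x*t + Real.sqrt (1 - x^2) * Real.sqrt (1 - t^2)) := by
    continuity
  have hcS : Continuous (fun t : ℝ => Real.sqrt (1 - t^2)) := by continuity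
  unfold hadFx
  apply ContinuousAt.sub
  apply ContinuousAt.sub
  apply ContinuousAt.add
  · exact continuousAt_const.mul
      ((hcQ.continuousAt.log hQ.ne').sub
        (((continuous_const.sub continuous_id).continuousAt (x := y)).log hxy'))
  · exact continuousAt_const.mul Real.continuous_arcsin.continuousAt
  · exact hcS.continuousAt.div_const 2
  · exact continuousAt_const.mul
      (hcS.continuousAt.div ((continuous_const.sub continuous_id).continuousAt) hxy')

lemma had_integral (x a b : ℝ) (hx : x ∈ Set.Ioo (-1 : ℝ) 1) (hab : a ≤ b) (ha : -1 ≤ a)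
    (hb : b ≤ 1) (hxab : x ∉ Set.Icc a b) :
    ∫ y in a..b, -(y / 2) * Real.sqrt (1 - y ^ 2) / (x - y) ^ 2 = hadFx x b - hadFx x a := by
  apply intervalIntegral.integral_eq_sub_of_hasDeriv_right_of_le hab
  · intro y hy
    exact (hadFx_contAt x y hx ⟨ha.trans hy.1, hy.2.trans hb⟩
      (fun h => hxab (h ▸ hy))).continuousWithinAt
  · intro y hy
    exact (hadFx_deriv x y hx ⟨lt_of_le_of_lt ha hy.1, lt_of_lt_of_le hy.2 hb⟩
      (fun h => hxab ⟨(h ▸ hy.1).le, (h ▸ hy.2).le⟩)).hasDerivWithinAt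
  · apply ContinuousOn.intervalIntegrable_of_Icc hab
    intro y hy
    have hyx : x - y ≠ 0 := sub_ne_zero.2 fun h => hxab (h ▸ hy)
    have hxy' : (x - y)^2 ≠ 0 := pow_ne_zero 2 hyx
    have h1 : ContinuousAt (fun t : ℝ => -(t / 2) * Real.sqrt (1 - t ^ 2)) y := by fun_prop
    have h2 : ContinuousAt (fun t : ℝ => (x - t) ^ 2) y := by fun_prop
    exact (h1.div h2 hxy').continuousWithinAt

lemma hadFx_one (x : ℝ) : hadFx x 1 = x * π / 2 := by
  have h0 : (1:ℝ) - 1^2 = 0 := by norm_num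
  have hlog : Real.log (x - 1) = Real.log (1 - x*1) := by
    rw [show x - 1 = -(1 - x*1) by ring, Real.log_neg_eq_log]
  simp [hadFx, h0, Real.arcsin_one, hlog]
  ring

lemma hadFx_neg_one (x : ℝ) : hadFx x (-1) = -(x * π / 2) := by
  have h0 : (1:ℝ) - (-1:ℝ)^2 = 0 := by norm_num
  have hlog : Real.log (x - (-1)) = Real.log (1 - x*(-1)) := by
    rw [show x - (-1) = 1 - x*(-1) by ring]
  simp [hadFx, h0, Real.arcsin_neg_one, hlog]
  ring

theorem hadamard_of_neg_half_x_sqrt (x : ℝ) (hx : x ∈ Set.Ioo (-1 : ℝ) 1) :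
    Tendsto
      (fun δ : ℝ =>
        (1 / π) * ((∫ y in (-1 : ℝ)..(x - δ), -(y / 2) * Real.sqrt (1 - y ^ 2) / (x - y) ^ 2) +
          (∫ y in (x + δ)..(1 : ℝ), -(y / 2) * Real.sqrt (1 - y ^ 2) / (x - y) ^ 2) -
            2 * (-(x / 2) * Real.sqrt (1 - x ^ 2)) / δ))
      (nhdsWithin 0 (Set.Ioi 0)) (nhds x) := by
  obtain ⟨hx1, hx2⟩ := hx
  have hx' : x ∈ Set.Ioo (-1 : ℝ) 1 := ⟨hx1, hx2⟩
  have hs2pos : (0:ℝ) < 1 - x^2 := by nlinarith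
  set s := Real.sqrt (1 - x^2) with hs_def
  have hs : 0 < s := Real.sqrt_pos.2 hs2pos
  set Sq : ℝ → ℝ := fun t => Real.sqrt (1 - t^2) with hSq_def
  set F0 : ℝ → ℝ := fun t => ((1 - 2*x^2) / (2*s)) *
      Real.log (1 - x*t + s * Real.sqrt (1 - t^2)) + x * Real.arcsin t - Sq t / 2 with hF0_def
  set m : ℝ := min (1 + x) (1 - x) with hm_def
  have hm : 0 < m := lt_min (by linarith) (by linarith)
  -- the nicer expression
  set G : ℝ → ℝ := fun δ => (F0 (x - δ) - F0 (x + δ)) -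
      (x/2) * (slope Sq x (x + δ) - slope Sq x (x - δ)) with hG_def
  have hev : ∀ᶠ δ in nhdsWithin (0:ℝ) (Set.Ioi 0),
      (1 / π) * ((∫ y in (-1 : ℝ)..(x - δ), -(y / 2) * Real.sqrt (1 - y ^ 2) / (x - y) ^ 2) +
          (∫ y in (x + δ)..(1 : ℝ), -(y / 2) * Real.sqrt (1 - y ^ 2) / (x - y) ^ 2) -
            2 * (-(x / 2) * Real.sqrt (1 - x ^ 2)) / δ) = (1/π) * (π * x + G δ) := by
    filter_upwards [Ioo_mem_nhdsGT_of_mem ⟨le_refl (0:ℝ), hm⟩] with δ hδ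
    obtain ⟨hδ0, hδm⟩ := hδ
    have hδ1 : δ < 1 + x := lt_of_lt_of_le hδm (min_le_left _ _)
    have hδ2 : δ < 1 - x := lt_of_lt_of_le hδm (min_le_right _ _)
    have hI1 : ∫ y in (-1 : ℝ)..(x - δ), -(y / 2) * Real.sqrt (1 - y ^ 2) / (x - y) ^ 2
        = hadFx x (x - δ) - hadFx x (-1) :=
      had_integral x (-1) (x - δ) hx' (by linarith) le_rfl (by linarith)
        (fun h => by simp at h; linarith [h.2])
    have hI2 : ∫ y in (x + δ)..(1:ℝ), -(y / 2) * Real.sqrt (1 - y ^ 2) / (x - y) ^ 2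
        = hadFx x 1 - hadFx x (x + δ) :=
      had_integral x (x + δ) 1 hx' (by linarith) (by linarith) le_rfl
        (fun h => by simp at h; linarith [h.1])
    rw [hI1, hI2, hadFx_one, hadFx_neg_one]
    have hGδ : hadFx x (x - δ) - hadFx x (x + δ) + x * s / δ = G δ := by
      have e1 : x - (x - δ) = δ := by ring
      have e2 : x - (x + δ) = -δ := by ring
      have e3 : Real.log (-δ) = Real.log δ := Real.log_neg_eq_log δ
      simp only [hadFx, hG_def, hF0_def, hSq_def, e1, e2, e3, slope_def_field]
      have h4 : x + δ - x = δ := by ring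
      have h5 : x - δ - x = -δ := by ring
      rw [h4, h5]
      simp only [← hs_def]
      field_simp [hδ0.ne', hs.ne']
      ring
    rw [← hGδ]
    field_simp
    ring
  rw [Filter.tendsto_congr' hev]
  have hG0 : Tendsto G (nhdsWithin (0:ℝ) (Set.Ioi 0)) (nhds 0) := by
    have hTp : Tendsto (fun δ : ℝ => x + δ) (nhdsWithin (0:ℝ) (Set.Ioi 0))
        (nhdsWithin x {x}ᶜ) := by
      rw [tendsto_nhdsWithin_iff]
      constructor
      · have : Tendsto (fun δ : ℝ => x + δ) (nhds (0:ℝ)) (nhds x) := by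
          simpa [Pi.add_def] using (continuous_const.add continuous_id).tendsto (0:ℝ)
        exact this.mono_left nhdsWithin_le_nhds
      · filter_upwards [self_mem_nhdsWithin] with δ (hδ : 0 < δ)
        simp [hδ.ne']
    have hTm : Tendsto (fun δ : ℝ => x - δ) (nhdsWithin (0:ℝ) (Set.Ioi 0))
        (nhdsWithin x {x}ᶜ) := by
      rw [tendsto_nhdsWithin_iff]
      constructor
      · have : Tendsto (fun δ : ℝ => x - δ) (nhds (0:ℝ)) (nhds x) := by
          simpa [Pi.sub_def] using (continuous_const.sub continuous_id).tendsto (0:ℝ)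
        exact this.mono_left nhdsWithin_le_nhds
      · filter_upwards [self_mem_nhdsWithin] with δ (hδ : 0 < δ)
        simp [hδ.ne']
    -- derivative of Sq at x
    have hsq : HasDerivAt Sq (-(2*x) / (2*s)) x := by
      have h1 : HasDerivAt (fun t : ℝ => 1 - t^2) (-(2*x)) x := by
        simpa using ((hasDerivAt_pow 2 x).const_sub 1)
      have := (Real.hasDerivAt_sqrt hs2pos.ne').comp x h1
      simpa [hSq_def, hs_def, div_eq_mul_inv, mul_comm, Function.comp_def] using this
    have hslope : Tendsto (slope Sq x) (nhdsWithin x {x}ᶜ) (nhds (-(2*x) / (2*s))) :=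
      hasDerivAt_iff_tendsto_slope.1 hsq
    -- continuity of F0 at x
    have hQx : 0 < 1 - x*x + s * Real.sqrt (1 - x^2) := by
      nlinarith [Real.sq_sqrt hs2pos.le, hs]
    have hF0c : ContinuousAt F0 x := by
      have hcQ : ContinuousAt (fun t : ℝ => 1 - x*t + s * Real.sqrt (1 - t^2)) x := by fun_prop
      have hcS : ContinuousAt (fun t : ℝ => Real.sqrt (1 - t^2)) x := by fun_prop
      exact ((continuousAt_const.mul (hcQ.log hQx.ne')).add
        (continuousAt_const.mul Real.continuous_arcsin.continuousAt)).sub (hcS.div_const 2)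
    have hTp' : Tendsto (fun δ : ℝ => x + δ) (nhdsWithin (0:ℝ) (Set.Ioi 0)) (nhds x) :=
      hTp.mono_right nhdsWithin_le_nhds
    have hTm' : Tendsto (fun δ : ℝ => x - δ) (nhdsWithin (0:ℝ) (Set.Ioi 0)) (nhds x) :=
      hTm.mono_right nhdsWithin_le_nhds
    have h1 : Tendsto (fun δ : ℝ => F0 (x - δ) - F0 (x + δ)) (nhdsWithin (0:ℝ) (Set.Ioi 0))
        (nhds 0) := by
      have := ((hF0c.tendsto.comp hTm').sub (hF0c.tendsto.comp hTp'))
      simpa using this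
    have h2 : Tendsto (fun δ : ℝ => (x/2) * (slope Sq x (x + δ) - slope Sq x (x - δ)))
        (nhdsWithin (0:ℝ) (Set.Ioi 0)) (nhds 0) := by
      have := ((hslope.comp hTp).sub (hslope.comp hTm)).const_mul (x/2)
      simpa using this
    simpa using h1.sub h2
  have := (tendsto_const_nhds (x := π * x)
      (f := nhdsWithin (0:ℝ) (Set.Ioi 0))).add hG0
  have hfin := this.const_mul (1/π)
  have hπ : (π:ℝ) ≠ 0 := Real.pi_ne_zero
  have : (1/π) * (π * x + 0) = x := by field_simp; ring
  rw [this] at hfin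
  exact hfin
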